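/- If φ is an entire function satisfying φ(z)³ - 3φ(z) = z³ - 3z for all z ∈ ℂ, then φ(z) = O(|z|) as |z| → ∞, and hence φ is a polynomial of degree at most 1. -/

import Mathlib

/-- An entire `φ` with `φ(z)³ - 3φ(z) = z³ - 3z` satisfies `φ(z) = O(|z|)` as
`|z| → ∞`, and hence is a polynomial of degree at most one: `φ(z) = a + bz`. -/
theorem entire_solution_is_affine (φ : ℂ → ℂ)
    (hφ : Differentiable ℂ φ)
    (h : ∀ z : ℂ, φ z ^ 3 - 3 * φ z = z ^ 3 - 3 * z) :
    (∃ C R : ℝ, ∀ z : ℂ, R ≤ ‖z‖ →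
      ‖φ z‖ ≤ C * ‖z‖) ∧
    (∃ a b : ℂ, ∀ z : ℂ, φ z = a + b * z) := by
  have growth : ∀ z : ℂ, 2 ≤ ‖z‖ → ‖φ z‖ ≤ 2 * ‖z‖ := by
    intro z hz
    by_contra hc
    push_neg at hc
    set t := ‖φ z‖ with ht
    set s := ‖z‖ with hs
    have key : φ z ^ 3 = z ^ 3 - 3 * z + 3 * φ z := by
      have := h z; ring_nf at this ⊢; linear_combination this
    have hb : t ^ 3 ≤ s ^ 3 + 3 * s + 3 * t := by
      calc t ^ 3 = ‖φ z ^ 3‖ := by simp [ht, map_pow]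
        _ = ‖z ^ 3 - 3 * z + 3 * φ z‖ := by rw [key]
        _ ≤ ‖z ^ 3 - 3 * z‖ + ‖3 * φ z‖ := norm_add_le _ _
        _ ≤ (‖z ^ 3‖ + ‖3 * z‖) + ‖3 * φ z‖ := by
            gcongr ?_ + _
            have h4 := norm_add_le (z ^ 3) (-(3 * z))
            rw [← sub_eq_add_neg] at h4
            simpa using h4
        _ = s ^ 3 + 3 * s + 3 * t := by
            simp only [norm_pow, norm_mul, Complex.norm_ofNat]
            try ring
    nlinarith [hz, hc, sq_nonneg t, sq_nonneg s, sq_nonneg (t - s)]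
  refine ⟨⟨2, 2, growth⟩, ?_⟩
  -- Liouville for the difference quotient
  set g := dslope φ 0 with hg
  have hgd : Differentiable ℂ g := by
    intro z
    rcases eq_or_ne z 0 with rfl | hz
    · obtain ⟨p, hp⟩ := hφ.analyticAt 0
      exact (HasFPowerSeriesAt.has_fpower_series_dslope_fslope hp).differentiableAt
    · exact ((differentiableWithinAt_dslope_of_ne hz).2
        (hφ z).differentiableWithinAt).differentiableAt Filter.univ_mem
  have hgc : Continuous g := hgd.continuous
  -- bound g
  have hb : Bornology.IsBounded (Set.range g) := by
    obtain ⟨M, hM⟩ := (isCompact_closedBall (0 : ℂ) 2).exists_bound_of_continuousOn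
      hgc.continuousOn
    rw [isBounded_iff_forall_norm_le]
    refine ⟨max M (2 + ‖φ 0‖ / 2), ?_⟩
    rintro _ ⟨z, rfl⟩
    rcases le_or_gt (‖z‖) 2 with hz | hz
    · exact le_max_of_le_left (hM z (by simpa [Complex.dist_eq] using hz))
    · have hz0 : z ≠ 0 := by
        intro hzz; simp [hzz] at hz; norm_num at hz
      have : g z = (φ z - φ 0) / z := by
        rw [hg, dslope_of_ne _ hz0, slope_def_field]
        field_simp
        rw [sub_zero]
      rw [this]
      refine le_max_of_le_right ?_
      rw [norm_div]
      rw [div_le_iff₀ (by simpa using (lt_trans (by norm_num) hz : (0:ℝ) < ‖z‖))]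
      have h1 : ‖φ z‖ ≤ 2 * ‖z‖ := growth z hz.le
      have h2 : ‖φ z - φ 0‖ ≤ ‖φ z‖ + ‖φ 0‖ := norm_sub_le _ _
      have h3 : ‖φ 0‖ ≤ (‖φ 0‖ / 2) * ‖z‖ := by
        rw [div_mul_eq_mul_div, le_div_iff₀ (by norm_num)]
        nlinarith [norm_nonneg (φ 0)]
      calc ‖φ z - φ 0‖ ≤ 2 * ‖z‖ + (‖φ 0‖ / 2) * ‖z‖ := by
            linarith
        _ = (2 + ‖φ 0‖ / 2) * ‖z‖ := by ring
  have hconst : ∀ z : ℂ, g z = g 0 := fun z => hgd.apply_eq_apply_of_bounded hb z 0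
  refine ⟨φ 0, g 0, fun z => ?_⟩
  rcases eq_or_ne z 0 with rfl | hz
  · simp
  · have h0 : g 0 = deriv φ 0 := dslope_same φ 0
    have := hconst z
    rw [hg, dslope_of_ne _ hz, slope_def_field, dslope_same] at this
    field_simp at this
    rw [h0]
    linear_combination this
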